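/- Let ω > 0 and let w_j^τ (j = 1,…,N−1, τ = ±) be the oscillatory waves w_j^τ(x,y) = e^{τiλ_j x}(e^{iκ_j y}, −ω⁻¹(τλ_j + iκ_j)e^{iκ_j y}, −ie^{−iκ_j y}, −iω⁻¹(τλ_j + iκ_j)e^{−iκ_j y}) with distinct κ_j ∈ π + (π/L)ℤ, |κ_j| < ω and λ_j = √(ω² − κ_j²) > 0. Then the symplectic form q satisfies q(w_j^τ, w_k^θ) = (4τiLλ_j/ω)·δ_{jk}δ_{τθ}. -/

import Mathlib

/-- The symplectic form `q(w, w̃)` evaluated at the cross-section `x = a`. -/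
noncomputable def qform (L a : ℝ) (u v u' v' tu tv tu' tv' : ℝ × ℝ → ℂ) : ℂ :=
  -Complex.I * ∫ y in (0 : ℝ)..L,
    ((starRingEnd ℂ) (tu (a, y)) * v (a, y) + (starRingEnd ℂ) (tv (a, y)) * u (a, y)
      - (starRingEnd ℂ) (tu' (a, y)) * v' (a, y) - (starRingEnd ℂ) (tv' (a, y)) * u' (a, y))

/-- Components of the oscillatory wave `w_j^τ` with transverse number `κj`,
longitudinal number `λj` and sign `τ = ±1`. -/
noncomputable def oscU (lamj κj τ : ℝ) : ℝ × ℝ → ℂ := fun p =>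
  Complex.exp (Complex.I * (τ * lamj) * p.1) * Complex.exp (Complex.I * κj * p.2)
noncomputable def oscV (ω lamj κj τ : ℝ) : ℝ × ℝ → ℂ := fun p =>
  Complex.exp (Complex.I * (τ * lamj) * p.1) *
    (-((ω : ℂ)⁻¹ * ((τ * lamj : ℝ) + Complex.I * κj)) * Complex.exp (Complex.I * κj * p.2))
noncomputable def oscU' (lamj κj τ : ℝ) : ℝ × ℝ → ℂ := fun p =>
  Complex.exp (Complex.I * (τ * lamj) * p.1) * (-Complex.I * Complex.exp (-(Complex.I * κj * p.2)))
noncomputable def oscV' (ω lamj κj τ : ℝ) : ℝ × ℝ → ℂ := fun p =>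
  Complex.exp (Complex.I * (τ * lamj) * p.1) *
    (-(Complex.I * (ω : ℂ)⁻¹ * ((τ * lamj : ℝ) + Complex.I * κj)) *
      Complex.exp (-(Complex.I * κj * p.2)))

/-- The pointwise value of the symplectic integrand at `x = 0`. -/
lemma osc_integrand (κj κk lamj lamk ω τ θ y : ℝ) :
    (starRingEnd ℂ) (Complex.exp (Complex.I * κk * y)) *
      (-((ω : ℂ)⁻¹ * ((τ * lamj : ℝ) + Complex.I * κj)) * Complex.exp (Complex.I * κj * y))
    + (starRingEnd ℂ) (-((ω : ℂ)⁻¹ * ((θ * lamk : ℝ) + Complex.I * κk)) *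
        Complex.exp (Complex.I * κk * y)) * Complex.exp (Complex.I * κj * y)
    - (starRingEnd ℂ) (-Complex.I * Complex.exp (-(Complex.I * κk * y))) *
        (-(Complex.I * (ω : ℂ)⁻¹ * ((τ * lamj : ℝ) + Complex.I * κj)) *
          Complex.exp (-(Complex.I * κj * y)))
    - (starRingEnd ℂ) (-(Complex.I * (ω : ℂ)⁻¹ * ((θ * lamk : ℝ) + Complex.I * κk)) *
        Complex.exp (-(Complex.I * κk * y))) * (-Complex.I * Complex.exp (-(Complex.I * κj * y)))
    = (-((ω : ℂ)⁻¹) * (((τ * lamj : ℝ) : ℂ) + Complex.I * κj + ((θ * lamk : ℝ) : ℂ)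
        - Complex.I * κk))
      * (Complex.exp (Complex.I * ((κj : ℂ) - κk) * y)
        + Complex.exp (Complex.I * ((κk : ℂ) - κj) * y)) := by
  have c1 : ∀ c : ℝ, (starRingEnd ℂ) (Complex.exp (Complex.I * c * y))
      = Complex.exp (-(Complex.I * c * y)) := by
    intro c; rw [← Complex.exp_conj]; congr 1
    simp only [map_mul, Complex.conj_I, Complex.conj_ofReal, map_neg]; ring
  have c2 : ∀ c : ℝ, (starRingEnd ℂ) (Complex.exp (-(Complex.I * c * y)))
      = Complex.exp (Complex.I * c * y) := by
    intro c; rw [← Complex.exp_conj]; congr 1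
    simp only [map_mul, Complex.conj_I, Complex.conj_ofReal, map_neg]; ring
  have hsub : ∀ c d : ℝ, Complex.exp (Complex.I * ((c : ℂ) - d) * y)
      = Complex.exp (Complex.I * c * y) * Complex.exp (-(Complex.I * d * y)) := by
    intro c d; rw [← Complex.exp_add]; congr 1; ring
  simp only [map_mul, map_neg, map_add, Complex.conj_I, map_inv₀, Complex.conj_ofReal,
    c1, c2, hsub]
  linear_combination ((ω : ℂ)⁻¹ * (((τ * lamj : ℝ) : ℂ) + ((θ * lamk : ℝ) : ℂ)
    + Complex.I * ((κj : ℂ) - κk)) * Complex.exp (Complex.I * κk * y)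
    * Complex.exp (-(Complex.I * κj * y))) * Complex.I_sq

open Real in
theorem stmt9 {ι : Type*} [DecidableEq ι] (L ω : ℝ) (hL : 0 < L) (hω : 0 < ω)
    (κ : ι → ℝ) (m : ι → ℤ)
    (hκm : ∀ j, κ j = π + π * m j / L)
    (hinj : Function.Injective κ)
    (hbound : ∀ j, |κ j| < ω)
    (lam : ι → ℝ) (hlam : ∀ j, lam j = Real.sqrt (ω ^ 2 - κ j ^ 2))
    (j k : ι) (τ θ : ℝ) (hτ : τ = 1 ∨ τ = -1) (hθ : θ = 1 ∨ θ = -1) :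
    qform L 0 (oscU (lam j) (κ j) τ) (oscV ω (lam j) (κ j) τ)
        (oscU' (lam j) (κ j) τ) (oscV' ω (lam j) (κ j) τ)
        (oscU (lam k) (κ k) θ) (oscV ω (lam k) (κ k) θ)
        (oscU' (lam k) (κ k) θ) (oscV' ω (lam k) (κ k) θ)
      = if j = k ∧ τ = θ then 4 * (τ : ℂ) * Complex.I * L * (lam j) / ω else 0 := by
  have hω' : (ω : ℂ) ≠ 0 := Complex.ofReal_ne_zero.mpr hω.ne'
  have hL' : (L : ℝ) ≠ 0 := hL.ne'
  set C : ℂ := -((ω : ℂ)⁻¹) * (((τ * lam j : ℝ) : ℂ) + Complex.I * κ j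
      + ((θ * lam k : ℝ) : ℂ) - Complex.I * κ k) with hC
  unfold qform
  have hEq : Set.EqOn
      (fun y : ℝ =>
        ((starRingEnd ℂ) (oscU (lam k) (κ k) θ ((0:ℝ), y)) * oscV ω (lam j) (κ j) τ ((0:ℝ), y)
          + (starRingEnd ℂ) (oscV ω (lam k) (κ k) θ ((0:ℝ), y)) * oscU (lam j) (κ j) τ ((0:ℝ), y)
          - (starRingEnd ℂ) (oscU' (lam k) (κ k) θ ((0:ℝ), y)) * oscV' ω (lam j) (κ j) τ ((0:ℝ), y)
          - (starRingEnd ℂ) (oscV' ω (lam k) (κ k) θ ((0:ℝ), y))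
              * oscU' (lam j) (κ j) τ ((0:ℝ), y)))
      (fun y : ℝ => C * (Complex.exp (Complex.I * ((κ j : ℂ) - κ k) * y)
          + Complex.exp (Complex.I * ((κ k : ℂ) - κ j) * y)))
      (Set.uIcc (0 : ℝ) L) := by
    intro y _
    simp only [oscU, oscV, oscU', oscV', Complex.ofReal_zero, mul_zero, Complex.exp_zero,
      one_mul]
    exact osc_integrand (κ j) (κ k) (lam j) (lam k) ω τ θ y
  rw [intervalIntegral.integral_congr hEq]
  have hint1 : IntervalIntegrable
      (fun y : ℝ => Complex.exp (Complex.I * ((κ j : ℂ) - κ k) * y)) MeasureTheory.volume 0 L :=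
    (Complex.continuous_exp.comp (by continuity)).intervalIntegrable _ _
  have hint2 : IntervalIntegrable
      (fun y : ℝ => Complex.exp (Complex.I * ((κ k : ℂ) - κ j) * y)) MeasureTheory.volume 0 L :=
    (Complex.continuous_exp.comp (by continuity)).intervalIntegrable _ _
  rw [intervalIntegral.integral_const_mul, intervalIntegral.integral_add hint1 hint2]
  rcases eq_or_ne j k with rfl | hjk
  · -- j = k
    simp only [sub_self, mul_zero, zero_mul, Complex.exp_zero]
    rw [intervalIntegral.integral_const]
    rcases eq_or_ne τ θ with rfl | hτθ
    · rw [if_pos (⟨trivial, rfl⟩ : True ∧ τ = τ), hC]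
      push_cast
      field_simp
      simp only [Complex.real_smul]
      ring
    · rw [if_neg (by tauto), hC]
      have hθτ : θ = -τ := by rcases hτ with rfl | rfl <;> rcases hθ with rfl | rfl <;>
        first | exact absurd rfl hτθ | norm_num
      subst hθτ
      push_cast
      ring
  · -- j ≠ k
    have hκ : κ j - κ k = π * ((m j : ℝ) - m k) / L := by
      rw [hκm j, hκm k]; field_simp; ring
    have hκne : (κ j : ℂ) - κ k ≠ 0 := by
      rw [sub_ne_zero]
      exact fun h => hjk (hinj (Complex.ofReal_injective h))
    have hc : Complex.I * ((κ j : ℂ) - κ k) ≠ 0 := mul_ne_zero Complex.I_ne_zero hκne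
    have hc' : Complex.I * ((κ k : ℂ) - κ j) ≠ 0 := by
      intro h; apply hc
      have : ((κ k : ℂ) - κ j) = -(((κ j : ℂ)) - κ k) := by ring
      rw [this, mul_neg, neg_eq_zero] at h
      exact h
    rw [integral_exp_mul_complex hc, integral_exp_mul_complex hc']
    have hone : Complex.exp (Complex.I * ((κ j : ℂ) - κ k) * L)
        * Complex.exp (Complex.I * ((κ j : ℂ) - κ k) * L) = 1 := by
      rw [← Complex.exp_add]
      have harg : Complex.I * ((κ j : ℂ) - κ k) * L + Complex.I * ((κ j : ℂ) - κ k) * L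
          = ((m j - m k : ℤ) : ℂ) * (2 * π * Complex.I) := by
        have : ((κ j : ℂ) - κ k) = (π : ℂ) * ((m j : ℂ) - m k) / L := by
          have := hκ
          push_cast
          rw [show ((κ j : ℂ)) - κ k = ((κ j - κ k : ℝ) : ℂ) by push_cast; ring, this]
          push_cast
          ring
        rw [this]
        have hLc : (L : ℂ) ≠ 0 := Complex.ofReal_ne_zero.mpr hL'
        field_simp
        push_cast
        ring
      rw [harg, Complex.exp_int_mul_two_pi_mul_I]
    have h2 : Complex.exp (Complex.I * ((κ k : ℂ) - κ j) * L)
        = Complex.exp (Complex.I * ((κ j : ℂ) - κ k) * L) := by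
      have hneg : Complex.I * ((κ k : ℂ) - κ j) * L
          = -(Complex.I * ((κ j : ℂ) - κ k) * L) := by ring
      rw [hneg, Complex.exp_neg, inv_eq_of_mul_eq_one_right hone]
    rw [if_neg (by tauto), h2]
    have hz0 : ∀ c : ℂ, c * (0 : ℂ) = 0 := fun c => mul_zero c
    simp only [Complex.ofReal_zero, mul_zero, Complex.exp_zero]
    set E := Complex.exp (Complex.I * ((κ j : ℂ) - κ k) * L)
    have : (E - 1) / (Complex.I * ((κ j : ℂ) - κ k))
        + (E - 1) / (Complex.I * ((κ k : ℂ) - κ j)) = 0 := by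
      have hneg : Complex.I * ((κ k : ℂ) - κ j) = -(Complex.I * ((κ j : ℂ) - κ k)) := by ring
      rw [hneg, div_neg]
      ring
    rw [this, mul_zero, mul_zero]
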